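/- Let (vᵢ)_{i∈I} be a family of vectors in a Hilbert space H such that for every choice of signs εᵢ = ±1 the sum Σᵢ εᵢ vᵢ converges unconditionally. Then sup over all sign choices of ‖Σᵢ εᵢ vᵢ‖² is at least Σᵢ ‖vᵢ‖². -/

import Mathlib

open scoped ENNReal NNReal

/-- Let `(vᵢ)_{i∈I}` be a family of vectors in a Hilbert space `H` such that for every choice
of signs `εᵢ = ±1` the sum `Σᵢ εᵢ vᵢ` converges unconditionally.  Then the supremum, over all
sign choices, of `‖Σᵢ εᵢ vᵢ‖²` is at least `Σᵢ ‖vᵢ‖²` (both sides computed in `[0,∞]`). -/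
theorem stmt1 {H : Type*} [NormedAddCommGroup H] [InnerProductSpace ℂ H] [CompleteSpace H]
    {I : Type*} (v : I → H)
    (hconv : ∀ ε : I → ℝ, (∀ i, ε i = 1 ∨ ε i = -1) → Summable (fun i => ε i • v i)) :
    (∑' i, ((‖v i‖₊ : ℝ≥0∞) ^ 2))
      ≤ ⨆ ε : {ε : I → ℝ // ∀ i, ε i = 1 ∨ ε i = -1},
          ((‖∑' i, (ε : I → ℝ) i • v i‖₊ : ℝ≥0∞) ^ 2) := by
  classical
  -- Key inductive claim
  have key : ∀ s : Finset I, ∀ ε : I → ℝ, (∀ i, ε i = 1 ∨ ε i = -1) →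
      ∃ ε' : I → ℝ, (∀ i, ε' i = 1 ∨ ε' i = -1) ∧
        (∑ i ∈ s, ‖v i‖ ^ 2) + ‖(∑' i, ε i • v i) - ∑ i ∈ s, ε i • v i‖ ^ 2
          ≤ ‖∑' i, ε' i • v i‖ ^ 2 := by
    intro s
    induction s using Finset.induction_on with
    | empty =>
      intro ε hε
      exact ⟨ε, hε, by simp⟩
    | @insert j s hj IH =>
      intro ε hε
      set S := ∑' i, ε i • v i with hS
      set T := S - ∑ i ∈ insert j s, ε i • v i with hT
      -- choose the sign δ
      have hpar := parallelogram_law_with_norm ℂ T (v j)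
      obtain ⟨δ, hδ, hTδ⟩ : ∃ δ : ℝ, (δ = 1 ∨ δ = -1) ∧
          ‖T‖ ^ 2 + ‖v j‖ ^ 2 ≤ ‖T + δ • v j‖ ^ 2 := by
        rcases le_total (‖T - v j‖) (‖T + v j‖) with h | h
        · refine ⟨1, Or.inl rfl, ?_⟩
          rw [one_smul]
          nlinarith [norm_nonneg (T - v j), norm_nonneg (T + v j)]
        · refine ⟨-1, Or.inr rfl, ?_⟩
          have : T + (-1 : ℝ) • v j = T - v j := by
            simp [sub_eq_add_neg]
          rw [this]
          nlinarith [norm_nonneg (T - v j), norm_nonneg (T + v j)]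
      set ε₁ : I → ℝ := Function.update ε j δ with hε₁def
      have hε₁ : ∀ i, ε₁ i = 1 ∨ ε₁ i = -1 := by
        intro i
        by_cases hij : i = j
        · subst hij; simpa [hε₁def] using hδ
        · simpa [hε₁def, Function.update_of_ne hij] using hε i
      -- compute the new total sum
      have hsum1 : Summable (fun i => ε i • v i) := hconv ε hε
      have hsum2 : Summable (fun i => ε₁ i • v i) := hconv ε₁ hε₁
      have hdiff : (∑' i, ε₁ i • v i) - S = (δ - ε j) • v j := by
        rw [hS, ← Summable.tsum_sub hsum2 hsum1]
        rw [tsum_eq_single j]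
        · simp [hε₁def, Function.update_self, sub_smul]
        · intro i hij
          simp [hε₁def, Function.update_of_ne hij]
      have hS1 : (∑' i, ε₁ i • v i) = S + (δ - ε j) • v j := by
        rw [← hdiff]; abel
      -- compute the new tail
      have htail : (∑' i, ε₁ i • v i) - ∑ i ∈ s, ε₁ i • v i = T + δ • v j := by
        have h1 : ∑ i ∈ s, ε₁ i • v i = ∑ i ∈ s, ε i • v i := by
          apply Finset.sum_congr rfl
          intro i hi
          have : i ≠ j := fun h => hj (h ▸ hi)
          rw [hε₁def, Function.update_of_ne this]
        rw [hS1, h1, hT, Finset.sum_insert hj, sub_smul]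
        abel
      obtain ⟨ε', hε', hineq⟩ := IH ε₁ hε₁
      refine ⟨ε', hε', ?_⟩
      rw [htail] at hineq
      rw [Finset.sum_insert hj]
      nlinarith [hineq, hTδ]
  -- now conclude
  rw [ENNReal.tsum_eq_iSup_sum]
  refine iSup_le fun s => ?_
  obtain ⟨ε', hε', hineq⟩ := key s (fun _ => 1) (fun _ => Or.inl rfl)
  have hre : (∑ i ∈ s, ‖v i‖ ^ 2) ≤ ‖∑' i, ε' i • v i‖ ^ 2 := by
    nlinarith [hineq, sq_nonneg ‖(∑' i, (1:ℝ) • v i) - ∑ i ∈ s, (1:ℝ) • v i‖]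
  have hconv2 : ∀ x : H, ((‖x‖₊ : ℝ≥0∞)) ^ 2 = ENNReal.ofReal (‖x‖ ^ 2) := by
    intro x
    rw [ENNReal.ofReal_pow (norm_nonneg x), ofReal_norm, enorm_eq_nnnorm]
  calc (∑ i ∈ s, ((‖v i‖₊ : ℝ≥0∞)) ^ 2)
      = ENNReal.ofReal (∑ i ∈ s, ‖v i‖ ^ 2) := by
        rw [ENNReal.ofReal_sum_of_nonneg (fun i _ => sq_nonneg _)]
        exact Finset.sum_congr rfl fun i _ => hconv2 (v i)
    _ ≤ ENNReal.ofReal (‖∑' i, ε' i • v i‖ ^ 2) := ENNReal.ofReal_le_ofReal hre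
    _ = ((‖∑' i, ε' i • v i‖₊ : ℝ≥0∞)) ^ 2 := (hconv2 _).symm
    _ ≤ _ := le_iSup_of_le ⟨ε', hε'⟩ le_rfl
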